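/- Let G be an n-player game on a possibly infinite arena in which each player i's objective Ω_i is one of Reach(T_i), Büchi(T_i) or coBüchi(T_i) for some target set T_i ⊆ V. A play π = v_0 v_1 … is the outcome from v_0 of some Nash equilibrium if and only if for every player i with π ∉ Ω_i and every j ∈ ℕ, v_j ∉ W_i(Ω_i), where W_i(Ω_i) is the winning region of player i in their coalition game. -/

import Mathlib

open scoped ENNReal Classical

/-- An `n`-player arena on a (possibly infinite) directed graph: an edge relation
with no deadlocks, together with an assignment of each vertex to its owner. -/
structure Arena (V : Type) (n : ℕ) where
  E : V → V → Prop
  owner : V → Fin n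
  no_deadlock : ∀ v, ∃ v', E v v'

namespace Arena

variable {V : Type} {n : ℕ}

/-- A play: an infinite sequence of vertices following edges. -/
def IsPlay (A : Arena V n) (π : ℕ → V) : Prop := ∀ j, A.E (π j) (π (j + 1))

/-- A strategy: given the past history (the earlier vertices, oldest first) and the
current vertex, pick an `E`-successor of the current vertex. -/
structure Strategy (A : Arena V n) where
  next : List V → V → V
  valid : ∀ h v, A.E v (next h v)

/-- The list of the first `j` vertices of a play. -/
def pref (π : ℕ → V) (j : ℕ) : List V := (List.range j).map π

/-- A play is consistent with the strategy `σ` used by player `i`. -/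
def Consistent (A : Arena V n) (i : Fin n) (σ : A.Strategy) (π : ℕ → V) : Prop :=
  ∀ j, A.owner (π j) = i → π (j + 1) = σ.next (pref π j) (π j)

/-- A memoryless strategy only depends on the current vertex. -/
def Memoryless {A : Arena V n} (σ : A.Strategy) : Prop :=
  ∀ h h' v, σ.next h v = σ.next h' v

def outcomeAux (A : Arena V n) (σ : Fin n → A.Strategy) (v0 : V) : ℕ → List V × V
  | 0 => ([], v0)
  | j + 1 =>
      let p := outcomeAux A σ v0 j
      (p.1 ++ [p.2], (σ (A.owner p.2)).next p.1 p.2)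

/-- The outcome of the strategy profile `σ` from `v0`: the unique play from `v0`
consistent with every strategy of the profile. -/
def outcome (A : Arena V n) (σ : Fin n → A.Strategy) (v0 : V) (j : ℕ) : V :=
  (outcomeAux A σ v0 j).2

/-- Reachability objective: visit `T`. -/
def ReachObj (T : Set V) : Set (ℕ → V) := {π | ∃ j, π j ∈ T}

/-- Safety objective: never visit `T`. -/
def SafeObj (T : Set V) : Set (ℕ → V) := {π | ∀ j, π j ∉ T}

/-- Büchi objective: visit `T` infinitely often. -/
def BuchiObj (T : Set V) : Set (ℕ → V) := {π | ∀ j, ∃ k, j ≤ k ∧ π k ∈ T}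

/-- co-Büchi objective: visit `T` only finitely often. -/
def CoBuchiObj (T : Set V) : Set (ℕ → V) := {π | ∃ j, ∀ k, j ≤ k → π k ∉ T}

/-- Shortest-path cost of a play: the total weight up to the first visit of `T`,
and `⊤` if `T` is never visited. -/
noncomputable def spCost (w : V → V → ℕ) (T : Set V) (π : ℕ → V) : ℝ≥0∞ :=
  if ∃ k, π k ∈ T then
    (Finset.range (sInf {k | π k ∈ T})).sum fun j => (w (π j) (π (j + 1)) : ℝ≥0∞)
  else ⊤

/-- Winning region of player `p` (whose objective is `Ω`) in a two-player game:
vertices from which `p` has a strategy all of whose consistent plays lie in `Ω`. -/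
def WinRegion (A : Arena V 2) (p : Fin 2) (Ω : Set (ℕ → V)) : Set V :=
  {v | ∃ σ : A.Strategy, ∀ π, A.IsPlay π → π 0 = v → A.Consistent p σ π → π ∈ Ω}

/-- Lower value `inf_{σ₁} sup_{σ₂}` of a two-player zero-sum game with cost `c`
(minimised by player 1, maximised by player 2). -/
noncomputable def valIS (A : Arena V 2) (c : (ℕ → V) → ℝ≥0∞) (v : V) : ℝ≥0∞ :=
  ⨅ σ1 : A.Strategy, ⨆ σ2 : A.Strategy, c (outcome A ![σ1, σ2] v)

/-- Upper value `sup_{σ₂} inf_{σ₁}`. -/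
noncomputable def valSI (A : Arena V 2) (c : (ℕ → V) → ℝ≥0∞) (v : V) : ℝ≥0∞ :=
  ⨆ σ2 : A.Strategy, ⨅ σ1 : A.Strategy, c (outcome A ![σ1, σ2] v)

/-- Nash equilibrium from `v0` for cost functions (each player minimises):
no unilateral deviation decreases the deviator's cost. -/
def IsNECost (A : Arena V n) (cost : Fin n → (ℕ → V) → ℝ≥0∞)
    (σ : Fin n → A.Strategy) (v0 : V) : Prop :=
  ∀ (i : Fin n) (τ : A.Strategy),
    cost i (outcome A σ v0) ≤ cost i (outcome A (Function.update σ i τ) v0)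

/-- Nash equilibrium from `v0` for objectives: if a unilateral deviation of player `i`
satisfies `Ω i`, then so does the equilibrium outcome. -/
def IsNEObj (A : Arena V n) (Ω : Fin n → Set (ℕ → V))
    (σ : Fin n → A.Strategy) (v0 : V) : Prop :=
  ∀ (i : Fin n) (τ : A.Strategy),
    outcome A (Function.update σ i τ) v0 ∈ Ω i → outcome A σ v0 ∈ Ω i

/-- The coalition arena of player `i`: player `i` (as player `0`) against all others. -/
def coalition (A : Arena V n) (i : Fin n) : Arena V 2 where
  E := A.E
  owner := fun v => if A.owner v = i then 0 else 1
  no_deadlock := A.no_deadlock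

/-- Winning region of player `i` in their coalition game for objective `Ω`. -/
def coalWin (A : Arena V n) (i : Fin n) (Ω : Set (ℕ → V)) : Set V :=
  WinRegion (coalition A i) 0 Ω

/-- Value of a vertex in player `i`'s coalition game with cost `c`. -/
noncomputable def coalVal (A : Arena V n) (i : Fin n) (c : (ℕ → V) → ℝ≥0∞) (v : V) :
    ℝ≥0∞ :=
  valIS (coalition A i) c v

/-- Players whose reachability objective is satisfied by `π`. -/
def satReach (T : Fin n → Set V) (π : ℕ → V) : Set (Fin n) := {i | ∃ j, π j ∈ T i}

/-- Players whose safety objective is satisfied by `π`. -/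
def satSafe (T : Fin n → Set V) (π : ℕ → V) : Set (Fin n) := {i | ∀ j, π j ∉ T i}

/-- Players whose Büchi objective is satisfied by `π`. -/
def satBuchi (T : Fin n → Set V) (π : ℕ → V) : Set (Fin n) :=
  {i | ∀ j, ∃ k, j ≤ k ∧ π k ∈ T i}

/-- Players whose co-Büchi objective is satisfied by `π`. -/
def satCoBuchi (T : Fin n → Set V) (π : ℕ → V) : Set (Fin n) :=
  {i | ∃ j, ∀ k, j ≤ k → π k ∉ T i}

/-- Earliest positions at which the targets visited by `π` are first visited. -/
def visitSet (T : Fin n → Set V) (π : ℕ → V) : Set ℕ :=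
  {m | ∃ i, (∃ j, π j ∈ T i) ∧ m = sInf {j | π j ∈ T i}}

/-- A Mealy machine with memory states `M`. -/
structure Mealy (A : Arena V n) (M : Type) where
  init : M
  up : M → V → M
  nxt : M → V → V
  valid : ∀ m v, A.E v (nxt m v)

/-- The strategy `σ` is induced by the Mealy machine `mm`. -/
def InducedBy {A : Arena V n} {M : Type} (σ : A.Strategy) (mm : Mealy A M) : Prop :=
  ∀ h v, σ.next h v = mm.nxt (h.foldl mm.up mm.init) v

/-- `σ` has memory size at most `b`. -/
def HasMemorySize {A : Arena V n} (σ : A.Strategy) (b : ℕ) : Prop :=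
  ∃ (M : Type) (mm : Mealy A M), Finite M ∧ Nat.card M ≤ b ∧ InducedBy σ mm

/-- `σ` is a finite-memory strategy. -/
def FiniteMemory {A : Arena V n} (σ : A.Strategy) : Prop :=
  ∃ (M : Type) (mm : Mealy A M), Finite M ∧ InducedBy σ mm

/-- The (finite) segment of `π` between positions `a` and `b` is a simple history. -/
def SimpleSeg (π : ℕ → V) (a b : ℕ) : Prop :=
  ∀ m m', a ≤ m → m ≤ b → a ≤ m' → m' ≤ b → π m = π m' → m = m'

/-- The suffix of `π` from position `a` is a simple play. -/
def SimplePlaySeg (π : ℕ → V) (a : ℕ) : Prop :=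
  ∀ m m', a ≤ m → a ≤ m' → π m = π m' → m = m'

/-- The suffix of `π` from position `a` is a simple lasso `p c^ω` with `p c`
a simple history. -/
def SimpleLassoSeg (π : ℕ → V) (a : ℕ) : Prop :=
  ∃ k ℓ, 0 < ℓ ∧ (∀ m, a + k ≤ m → π (m + ℓ) = π m) ∧
    ∀ m m', a ≤ m → m < a + k + ℓ → a ≤ m' → m' < a + k + ℓ → π m = π m' → m = m'

/-- The segment of `π` between positions `a` and `b` is a simple cycle. -/
def SimpleCycleSeg (π : ℕ → V) (a b : ℕ) : Prop :=
  a < b ∧ π b = π a ∧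
    ∀ m m', a ≤ m → m < b → a ≤ m' → m' < b → π m = π m' → m = m'

/-- Total weight of a history (a list of vertices). -/
def histWeight (w : V → V → ℕ) : List V → ℕ
  | [] => 0
  | [_] => 0
  | a :: b :: t => w a b + histWeight w (b :: t)

/-- The list of vertices along positions `a..b` (inclusive) of a play. -/
def segList (π : ℕ → V) (a b : ℕ) : List V :=
  (List.range (b - a + 1)).map fun m => π (a + m)

/-- The segment of `π` between positions `a` and `b` has minimal weight among all
histories that share its first and last vertex and traverse only its vertices. -/
def MinWeightSeg (A : Arena V n) (w : V → V → ℕ) (π : ℕ → V) (a b : ℕ) : Prop :=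
  ∀ h : List V, h ≠ [] → List.Chain' A.E h →
    h.head? = some (π a) → h.getLast? = some (π b) →
    (∀ x ∈ h, ∃ m, a ≤ m ∧ m ≤ b ∧ π m = x) →
    histWeight w (segList π a b) ≤ histWeight w h

/-- Given cut positions `p`, segments number `l` and `l'` of `π` carry the same
vertex sequence. -/
def SegEq (π : ℕ → V) (p : ℕ → ℕ) (l l' : ℕ) : Prop :=
  p (l' + 1) - p l' = p (l + 1) - p l ∧
    ∀ m, m ≤ p (l + 1) - p l → π (p l' + m) = π (p l + m)

/-- There is no cycle of the arena using only vertices of `S` and avoiding `avoid`. -/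
def NoCycleAvoid (A : Arena V n) (S : Set V) (avoid : V) : Prop :=
  ¬ ∃ (m : ℕ) (c : ℕ → V), 0 < m ∧ (∀ j, j < m → A.E (c j) (c (j + 1))) ∧
      c m = c 0 ∧ ∀ j, j ≤ m → c j ∈ S ∧ c j ≠ avoid


/-! ### Auxiliary development -/

section AuxDev
variable {V : Type}

open Arena

noncomputable def dsucc {n : ℕ} (A : Arena V n) (v : V) : V := Classical.choose (A.no_deadlock v)

lemma dsucc_spec {n : ℕ} (A : Arena V n) (v : V) : A.E v (dsucc A v) :=
  Classical.choose_spec (A.no_deadlock v)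

noncomputable def defStrat {n : ℕ} (A : Arena V n) : A.Strategy :=
  ⟨fun _ v => dsucc A v, fun _ v => dsucc_spec A v⟩

lemma pref_length (π : ℕ → V) (j : ℕ) : (pref π j).length = j := by simp [pref]

lemma pref_succ (π : ℕ → V) (j : ℕ) : pref π (j + 1) = pref π j ++ [π j] := by
  simp [pref, List.range_succ]

/-- shift of a play -/
def shift (π : ℕ → V) (a : ℕ) : ℕ → V := fun m => π (a + m)

lemma shift_zero_apply (π : ℕ → V) (m : ℕ) : shift π 0 m = π m := by simp [shift]

lemma pref_shift (π : ℕ → V) (a m : ℕ) : (pref π (a + m)).drop a = pref (shift π a) m := by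
  have h1 : pref π (a + m) = pref π a ++ (List.range m).map (fun k => π (a + k)) := by
    simp [pref, List.range_add, Function.comp]
  rw [h1, List.drop_append_of_le_length (by simp [pref_length])]
  simp [pref, shift, List.drop_eq_nil_of_le]

lemma pref_getD (π : ℕ → V) {m j : ℕ} (h : m < j) (d : V) : (pref π j).getD m d = π m := by
  rw [pref, List.getD_eq_getElem?_getD, List.getElem?_map, List.getElem?_range h]
  rfl

lemma pref_congr {f g : ℕ → V} {m : ℕ} (h : ∀ k < m, f k = g k) : pref f m = pref g m := by
  unfold pref
  exact List.map_congr_left (fun k hk => h k (List.mem_range.mp hk))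

lemma isPlay_shift {n : ℕ} {A : Arena V n} {π : ℕ → V} (h : A.IsPlay π) (a : ℕ) :
    A.IsPlay (shift π a) := by
  intro m; simpa [shift, Nat.add_assoc] using h (a + m)

variable {n : ℕ} {A : Arena V n}

lemma outcomeAux_fst (σ : Fin n → A.Strategy) (v0 : V) (j : ℕ) :
    (outcomeAux A σ v0 j).1 = pref (outcome A σ v0) j := by
  induction j with
  | zero => simp [outcomeAux, pref]
  | succ j ih =>
      rw [pref_succ]
      show (outcomeAux A σ v0 j).1 ++ [(outcomeAux A σ v0 j).2] = _
      rw [ih]; rfl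

lemma outcome_zero (σ : Fin n → A.Strategy) (v0 : V) : outcome A σ v0 0 = v0 := rfl

lemma outcome_succ (σ : Fin n → A.Strategy) (v0 : V) (j : ℕ) :
    outcome A σ v0 (j + 1) =
      (σ (A.owner (outcome A σ v0 j))).next (pref (outcome A σ v0) j) (outcome A σ v0 j) := by
  show (outcomeAux A σ v0 (j + 1)).2 = _
  rw [show (outcomeAux A σ v0 (j+1)).2
      = (σ (A.owner (outcomeAux A σ v0 j).2)).next (outcomeAux A σ v0 j).1 (outcomeAux A σ v0 j).2
      from rfl, outcomeAux_fst]
  rfl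

lemma outcome_isPlay (σ : Fin n → A.Strategy) (v0 : V) : A.IsPlay (outcome A σ v0) := by
  intro j; rw [outcome_succ]; exact (σ _).valid _ _

lemma outcome_eq {σ : Fin n → A.Strategy} {v0 : V} {ρ : ℕ → V} (h0 : ρ 0 = v0)
    (hs : ∀ m, ρ (m + 1) = (σ (A.owner (ρ m))).next (pref ρ m) (ρ m)) :
    outcome A σ v0 = ρ := by
  funext m
  induction m using Nat.strong_induction_on with
  | _ m ih =>
    match m with
    | 0 => exact h0.symm
    | m + 1 =>
        rw [outcome_succ, hs m, ih m (Nat.lt_succ_self m),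
          pref_congr (fun k hk => ih k (hk.trans (Nat.lt_succ_self m)))]

/-- extension of a finite consistent prefix to an infinite consistent play -/
noncomputable def extAux (A : Arena V n) (r : Fin n) (σ : A.Strategy) (ρ : ℕ → V) (b : ℕ) :
    ℕ → List V × V
  | 0 => ([], ρ 0)
  | m + 1 =>
      let s := extAux A r σ ρ b m
      (s.1 ++ [s.2],
        if m + 1 ≤ b then ρ (m + 1)
        else if A.owner s.2 = r then σ.next s.1 s.2 else dsucc A s.2)

noncomputable def extP (A : Arena V n) (r : Fin n) (σ : A.Strategy) (ρ : ℕ → V) (b : ℕ)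
    (m : ℕ) : V := (extAux A r σ ρ b m).2

lemma extAux_fst (r : Fin n) (σ : A.Strategy) (ρ : ℕ → V) (b : ℕ) (m : ℕ) :
    (extAux A r σ ρ b m).1 = pref (extP A r σ ρ b) m := by
  induction m with
  | zero => simp [extAux, pref]
  | succ m ih =>
      rw [pref_succ]
      show (extAux A r σ ρ b m).1 ++ [(extAux A r σ ρ b m).2] = _
      rw [ih]; rfl

lemma extP_zero (r : Fin n) (σ : A.Strategy) (ρ : ℕ → V) (b : ℕ) : extP A r σ ρ b 0 = ρ 0 := rfl

lemma extP_agree (r : Fin n) (σ : A.Strategy) (ρ : ℕ → V) (b : ℕ) :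
    ∀ m ≤ b, extP A r σ ρ b m = ρ m := by
  intro m hm
  cases m with
  | zero => rfl
  | succ m => show (if m + 1 ≤ b then ρ (m+1) else _) = ρ (m+1); rw [if_pos hm]

lemma extP_succ (r : Fin n) (σ : A.Strategy) (ρ : ℕ → V) (b m : ℕ) :
    extP A r σ ρ b (m + 1) =
      if m + 1 ≤ b then ρ (m + 1)
      else if A.owner (extP A r σ ρ b m) = r then
        σ.next (pref (extP A r σ ρ b) m) (extP A r σ ρ b m)
      else dsucc A (extP A r σ ρ b m) := by
  show (if m + 1 ≤ b then ρ (m + 1)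
      else if A.owner (extAux A r σ ρ b m).2 = r
        then σ.next (extAux A r σ ρ b m).1 (extAux A r σ ρ b m).2
        else dsucc A (extAux A r σ ρ b m).2) = _
  rw [extAux_fst]
  by_cases h1 : m + 1 ≤ b <;> by_cases h2 : A.owner (extAux A r σ ρ b m).2 = r <;>
    simp [h1, h2, extP]

lemma extP_isPlay (r : Fin n) (σ : A.Strategy) {ρ : ℕ → V} (b : ℕ)
    (hρ : ∀ m, m < b → A.E (ρ m) (ρ (m + 1))) : A.IsPlay (extP A r σ ρ b) := by
  intro m
  rw [extP_succ]
  split_ifs with h1 h2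
  · rw [extP_agree _ _ _ _ m (by omega)]
    exact hρ m (by omega)
  · rw [← extAux_fst]; exact σ.valid _ _
  · exact dsucc_spec A _

lemma extP_consistent (r : Fin n) (σ : A.Strategy) {ρ : ℕ → V} (b : ℕ)
    (hc : ∀ m, m + 1 ≤ b → A.owner (ρ m) = r → ρ (m + 1) = σ.next (pref ρ m) (ρ m)) :
    A.Consistent r σ (extP A r σ ρ b) := by
  intro m hm
  rw [extP_succ]
  split_ifs with h1
  · have hag : ∀ k ≤ m, extP A r σ ρ b k = ρ k := fun k hk => extP_agree _ _ _ _ k (by omega)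
    have hm' : A.owner (ρ m) = r := by rw [← hag m le_rfl]; exact hm
    rw [hag m le_rfl, hc m h1 hm', pref_congr (fun k hk => hag k (le_of_lt hk))]
  · rfl

end AuxDev

section ReachDet
open Arena
variable {V : Type}

lemma pref_ne_nil {π : ℕ → V} {m : ℕ} (hm : 1 ≤ m) : pref π m ≠ [] := by
  intro hh
  have h2 := congrArg List.length hh
  rw [pref_length] at h2
  simp at h2
  omega

lemma pref_getD_one (π : ℕ → V) {m : ℕ} (hm : 1 ≤ m) :
    (pref π m).getD 1 (π m) = π 1 := by
  rcases Nat.lt_or_ge m 2 with h | h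
  · have hm1 : m = 1 := by omega
    subst hm1
    simp [pref]
  · exact pref_getD π (by omega) _

/-- transfer of consistency to a shifted play -/
lemma shift_consistent {n : ℕ} {A : Arena V n} {p : Fin n} {σ τ : A.Strategy} {ρ : ℕ → V}
    (a : ℕ) (hcons : A.Consistent p σ ρ)
    (hnext : ∀ m, a ≤ m → A.owner (ρ m) = p →
      σ.next (pref ρ m) (ρ m) = τ.next (pref (shift ρ a) (m - a)) (ρ m)) :
    A.Consistent p τ (shift ρ a) := by
  intro m hm
  have hm' : A.owner (ρ (a + m)) = p := hm
  have h1 := hcons (a + m) hm'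
  have h2 := hnext (a + m) (Nat.le_add_right a m) hm'
  show ρ (a + (m + 1)) = _
  rw [show a + (m + 1) = (a + m) + 1 by omega, h1, h2,
    show a + m - a = m by omega]
  rfl

lemma winRegion_mono (A : Arena V 2) (p : Fin 2) {Ω Ω' : Set (ℕ → V)} (h : Ω ⊆ Ω') :
    WinRegion A p Ω ⊆ WinRegion A p Ω' :=
  fun _ ⟨σ, hσ⟩ => ⟨σ, fun π h1 h2 h3 => h (hσ π h1 h2 h3)⟩

variable (A : Arena V 2) (p : Fin 2) (S : Set V)

lemma win_of_mem {v : V} (hv : v ∈ S) : v ∈ WinRegion A p (ReachObj S) :=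
  ⟨defStrat A, fun π _ h0 _ => ⟨0, by rwa [h0]⟩⟩

lemma not_mem_of_not_win {v : V} (hv : v ∉ WinRegion A p (ReachObj S)) : v ∉ S :=
  fun h => hv (win_of_mem A p S h)

lemma reach_shift {π : ℕ → V} {a : ℕ} (h : shift π a ∈ ReachObj S) : π ∈ ReachObj S := by
  obtain ⟨k, hk⟩ := h
  exact ⟨a + k, hk⟩

lemma win_step {v w : V} (hp : A.owner v = p) (he : A.E v w)
    (hw : w ∈ WinRegion A p (ReachObj S)) : v ∈ WinRegion A p (ReachObj S) := by
  obtain ⟨σw, hσw⟩ := hw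
  refine ⟨⟨fun h u => if h = [] then (if A.E u w then w else dsucc A u)
      else σw.next (h.drop 1) u, ?_⟩, ?_⟩
  · intro h u
    split_ifs with h1 h2
    · exact h2
    · exact dsucc_spec A u
    · exact σw.valid _ _
  · intro ρ hplay h0 hcons
    have h1 : ρ 1 = w := by
      have how0 : A.owner (ρ 0) = p := by rw [h0]; exact hp
      have hc := hcons 0 how0
      rw [show (0:ℕ) + 1 = 1 from rfl] at hc
      rw [hc]
      show (if pref ρ 0 = [] then (if A.E (ρ 0) w then w else dsucc A (ρ 0))
          else σw.next ((pref ρ 0).drop 1) (ρ 0)) = w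
      rw [if_pos (show pref ρ 0 = ([] : List V) from rfl), if_pos (show A.E (ρ 0) w by rw [h0]; exact he)]
    have hsh : A.Consistent p σw (shift ρ 1) := by
      refine shift_consistent 1 hcons ?_
      intro m hm hown
      show (if pref ρ m = [] then _ else _) = _
      rw [if_neg (pref_ne_nil hm)]
      congr 1
      rw [show m = 1 + (m - 1) by omega, pref_shift]
      rw [show 1 + (m - 1) - 1 = m - 1 by omega]
    have := hσw (shift ρ 1) (isPlay_shift hplay 1) (by simpa [shift] using h1) hsh
    exact reach_shift S this
  
lemma win_all {v : V} (hw : ∀ w, A.E v w → w ∈ WinRegion A p (ReachObj S)) :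
    v ∈ WinRegion A p (ReachObj S) := by
  have hF : ∀ w : V, ∃ σw : A.Strategy, w ∈ WinRegion A p (ReachObj S) →
      ∀ π, A.IsPlay π → π 0 = w → A.Consistent p σw π → π ∈ ReachObj S := by
    intro w
    by_cases h : w ∈ WinRegion A p (ReachObj S)
    · obtain ⟨σw, hσw⟩ := h
      exact ⟨σw, fun _ => hσw⟩
    · exact ⟨defStrat A, fun hh => absurd hh h⟩
  choose F hFspec using hF
  refine ⟨⟨fun h u => if h = [] then dsucc A u
      else (F (h.getD 1 u)).next (h.drop 1) u, ?_⟩, ?_⟩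
  · intro h u
    split_ifs with h1
    · exact dsucc_spec A u
    · exact (F _).valid _ _
  · intro ρ hplay h0 hcons
    have hw1 : ρ 1 ∈ WinRegion A p (ReachObj S) := hw (ρ 1) (by rw [← h0]; exact hplay 0)
    have hsh : A.Consistent p (F (ρ 1)) (shift ρ 1) := by
      refine shift_consistent 1 hcons ?_
      intro m hm hown
      show (if pref ρ m = [] then _ else _) = _
      rw [if_neg (pref_ne_nil hm), pref_getD_one ρ hm]
      congr 1
      rw [show m = 1 + (m - 1) by omega, pref_shift]
      rw [show 1 + (m - 1) - 1 = m - 1 by omega]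
    have := hFspec (ρ 1) hw1 (shift ρ 1) (isPlay_shift hplay 1) rfl hsh
    exact reach_shift S this

/-- Determinacy of reachability: from outside the winning region, the opponent
can avoid the target forever. -/
theorem not_win_reach (q : Fin 2) (hpq : ∀ x : Fin 2, x ≠ p → x = q) {v : V}
    (hv : v ∉ WinRegion A p (ReachObj S)) :
    ∃ τ : A.Strategy, ∀ ρ, A.IsPlay ρ → ρ 0 = v → A.Consistent q τ ρ →
      ∀ m, ρ m ∉ S := by
  have pick : ∀ u : V, ∃ w, A.E u w ∧
      (u ∉ WinRegion A p (ReachObj S) → A.owner u ≠ p → w ∉ WinRegion A p (ReachObj S)) := by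
    intro u
    by_cases hu : u ∉ WinRegion A p (ReachObj S) ∧ A.owner u ≠ p
    · by_contra hno
      push_neg at hno
      refine hu.1 (win_all A p S (fun w hw => ?_))
      by_contra hwW
      exact hwW (hno w hw).2.2
    · exact ⟨dsucc A u, dsucc_spec A u, fun h1 h2 => absurd ⟨h1, h2⟩ hu⟩
  choose f hf1 hf2 using pick
  refine ⟨⟨fun _ u => f u, fun _ u => hf1 u⟩, ?_⟩
  intro ρ hplay h0 hcons
  have key : ∀ m, ρ m ∉ WinRegion A p (ReachObj S) := by
    intro m
    induction m with
    | zero => rwa [h0]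
    | succ m ih =>
        by_cases how : A.owner (ρ m) = p
        · intro hW
          exact ih (win_step A p S how (hplay m) hW)
        · have := hcons m (hpq _ how)
          rw [this]
          exact hf2 (ρ m) ih how
  exact fun m => not_mem_of_not_win A p S (key m)

end ReachDet

section GlueDev
open Arena
variable {V : Type}

/-- index of the most recent "restart" position in a history list -/
noncomputable def aIdx (R : Set V) (d : V) (L : List V) : ℕ :=
  Nat.findGreatest (fun m => 0 < m ∧ m < L.length ∧ L.getD m d ∈ R) (L.length - 1)

/-- strategy gluing: at each "anchor" (most recent visit of `R`, or start) use the
anchor move `f`, afterwards follow the strategy determined by the anchor vertex and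
its successor. -/
noncomputable def glueStrat (A : Arena V 2) (R : Set V) (f : V → V)
    (g : V → V → A.Strategy) : A.Strategy where
  next h v :=
    if aIdx R v (h ++ [v]) = h.length then (if A.E v (f v) then f v else dsucc A v)
    else ((g ((h ++ [v]).getD (aIdx R v (h ++ [v])) v)
        ((h ++ [v]).getD (aIdx R v (h ++ [v]) + 1) v)).next (h.drop (aIdx R v (h ++ [v]) + 1)) v)
  valid h v := by
    split_ifs with h1 h2
    · exact h2
    · exact dsucc_spec A v
    · exact (g _ _).valid _ _

lemma aIdx_pref {R : Set V} {π : ℕ → V} {a m : ℕ} (ham : a ≤ m)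
    (hA : a = 0 ∨ (0 < a ∧ π a ∈ R)) (hno : ∀ k, a < k → k ≤ m → π k ∉ R) (d : V) :
    aIdx R d (pref π (m + 1)) = a := by
  unfold aIdx
  rw [pref_length]
  simp only [Nat.add_sub_cancel]
  rw [Nat.findGreatest_eq_iff]
  refine ⟨ham, ?_, ?_⟩
  · intro hane
    rcases hA with h | h
    · exact absurd h hane
    · exact ⟨h.1, by omega, by rw [pref_getD π (by omega) d]; exact h.2⟩
  · intro k hk1 hk2 hP
    rw [pref_getD π (by omega) d] at hP
    exact hno k hk1 hk2 hP.2.2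

lemma glue_next {A : Arena V 2} {p : Fin 2} {R : Set V} {f : V → V} {g : V → V → A.Strategy}
    {π : ℕ → V} (hcons : A.Consistent p (glueStrat A R f g) π) {m : ℕ}
    (hown : A.owner (π m) = p) :
    π (m + 1) =
      if aIdx R (π m) (pref π (m + 1)) = m then
        (if A.E (π m) (f (π m)) then f (π m) else dsucc A (π m))
      else ((g ((pref π (m + 1)).getD (aIdx R (π m) (pref π (m + 1))) (π m))
          ((pref π (m + 1)).getD (aIdx R (π m) (pref π (m + 1)) + 1) (π m))).next
          ((pref π m).drop (aIdx R (π m) (pref π (m + 1)) + 1)) (π m)) := by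
  have hc := hcons m hown
  rw [hc]
  show (if aIdx R (π m) (pref π m ++ [π m]) = (pref π m).length then _ else _) = _
  rw [← pref_succ, pref_length]

lemma glue_anchor {A : Arena V 2} {p : Fin 2} {R : Set V} {f : V → V} {g : V → V → A.Strategy}
    {π : ℕ → V} (hcons : A.Consistent p (glueStrat A R f g) π) {a : ℕ}
    (hA : a = 0 ∨ (0 < a ∧ π a ∈ R)) (hown : A.owner (π a) = p) (hE : A.E (π a) (f (π a))) :
    π (a + 1) = f (π a) := by
  rw [glue_next hcons hown,
    aIdx_pref le_rfl hA (fun k h1 h2 => by omega) (π a),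
    if_pos rfl, if_pos hE]

lemma glue_seg {A : Arena V 2} {p : Fin 2} {R : Set V} {f : V → V} {g : V → V → A.Strategy}
    {π : ℕ → V} (hcons : A.Consistent p (glueStrat A R f g) π) {a m : ℕ}
    (hA : a = 0 ∨ (0 < a ∧ π a ∈ R)) (ham : a < m) (hno : ∀ k, a < k → k ≤ m → π k ∉ R)
    (hown : A.owner (π m) = p) :
    π (m + 1) = (g (π a) (π (a + 1))).next (pref (shift π (a + 1)) (m - (a + 1))) (π m) := by
  rw [glue_next hcons hown, aIdx_pref (le_of_lt ham) hA hno (π m), if_neg (by omega)]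
  rw [pref_getD π (by omega) (π m), pref_getD π (by omega) (π m)]
  congr 1
  rw [show m = (a + 1) + (m - (a + 1)) by omega, pref_shift]
  rw [show a + 1 + (m - (a + 1)) - (a + 1) = m - (a + 1) by omega]

lemma glue_tail {A : Arena V 2} {p : Fin 2} {R : Set V} {f : V → V} {g : V → V → A.Strategy}
    {π : ℕ → V} (hcons : A.Consistent p (glueStrat A R f g) π) {a : ℕ}
    (hA : a = 0 ∨ (0 < a ∧ π a ∈ R)) (hno : ∀ k, a < k → π k ∉ R) :
    A.Consistent p (g (π a) (π (a + 1))) (shift π (a + 1)) := by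
  intro m hm
  have hown : A.owner (π (a + 1 + m)) = p := hm
  have h := glue_seg hcons hA (show a < a + 1 + m by omega)
    (fun k h1 _ => hno k h1) hown
  show π (a + 1 + (m + 1)) = _
  rw [show a + 1 + (m + 1) = (a + 1 + m) + 1 by omega, h,
    show a + 1 + m - (a + 1) = m by omega]
  rfl

lemma glue_upto {A : Arena V 2} {p : Fin 2} {R : Set V} {f : V → V} {g : V → V → A.Strategy}
    {π : ℕ → V} (hplay : A.IsPlay π) (hcons : A.Consistent p (glueStrat A R f g) π) {a b : ℕ}
    (hA : a = 0 ∨ (0 < a ∧ π a ∈ R)) (hab : a < b) (hno : ∀ k, a < k → k < b → π k ∉ R) :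
    ∃ ρ : ℕ → V, A.IsPlay ρ ∧ ρ 0 = π (a + 1) ∧
      A.Consistent p (g (π a) (π (a + 1))) ρ ∧
      ∀ m, m ≤ b - (a + 1) → ρ m = π (a + 1 + m) := by
  set σ := g (π a) (π (a + 1)) with hσ
  set ρ0 := shift π (a + 1) with hρ0
  set B := b - (a + 1) with hB
  have hc : ∀ m, m + 1 ≤ B → A.owner (ρ0 m) = p → ρ0 (m + 1) = σ.next (pref ρ0 m) (ρ0 m) := by
    intro m hmB hown
    have h := glue_seg hcons hA (show a < a + 1 + m by omega)
      (fun k h1 h2 => hno k h1 (by omega)) hown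
    show π (a + 1 + (m + 1)) = _
    rw [show a + 1 + (m + 1) = (a + 1 + m) + 1 by omega, h,
      show a + 1 + m - (a + 1) = m by omega]
    rfl
  refine ⟨extP A p σ ρ0 B, extP_isPlay p σ B (fun m _ => isPlay_shift hplay (a + 1) m), ?_, ?_, ?_⟩
  · exact extP_zero p σ ρ0 B
  · exact extP_consistent p σ B hc
  · intro m hm
    exact extP_agree p σ ρ0 B m hm

end GlueDev

section BuchiPos
open Arena OrderHom
variable {V : Type}

/-- the operator whose greatest fixed point is the Büchi winning region -/
noncomputable def phi (A : Arena V 2) (p : Fin 2) (S : Set V) : Set V →o Set V :=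
  ⟨fun Z => {v | (A.owner v = p ∧ ∃ w, A.E v w ∧ w ∈ WinRegion A p (ReachObj (S ∩ Z))) ∨
      (A.owner v ≠ p ∧ ∀ w, A.E v w → w ∈ WinRegion A p (ReachObj (S ∩ Z)))}, by
    intro Z Z' hZ v hv
    have hW : WinRegion A p (ReachObj (S ∩ Z)) ⊆ WinRegion A p (ReachObj (S ∩ Z')) :=
      winRegion_mono A p (fun π ⟨k, hk⟩ => ⟨k, hk.1, hZ hk.2⟩)
    rcases hv with ⟨h1, w, h2, h3⟩ | ⟨h1, h2⟩
    · exact Or.inl ⟨h1, w, h2, hW h3⟩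
    · exact Or.inr ⟨h1, fun w hw => hW (h2 w hw)⟩⟩

theorem gfp_win_buchi (A : Arena V 2) (p : Fin 2) (S : Set V) {v : V}
    (hv : v ∈ gfp (phi A p S)) : v ∈ WinRegion A p (BuchiObj S) := by
  set G := gfp (phi A p S) with hGdef
  have hfix : phi A p S G = G := (phi A p S).map_gfp
  have hfex : ∀ u : V, ∃ w, A.E u w ∧
      (u ∈ phi A p S G → A.owner u = p → w ∈ WinRegion A p (ReachObj (S ∩ G))) := by
    intro u
    by_cases hc : u ∈ phi A p S G ∧ A.owner u = p
    · rcases hc.1 with ⟨_, w, h2, h3⟩ | ⟨h1, _⟩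
      · exact ⟨w, h2, fun _ _ => h3⟩
      · exact absurd hc.2 h1
    · exact ⟨dsucc A u, dsucc_spec A u, fun h1 h2 => absurd ⟨h1, h2⟩ hc⟩
  choose f hf1 hf2 using hfex
  have hgex : ∀ w : V, ∃ σw : A.Strategy, w ∈ WinRegion A p (ReachObj (S ∩ G)) →
      ∀ ρ, A.IsPlay ρ → ρ 0 = w → A.Consistent p σw ρ → ρ ∈ ReachObj (S ∩ G) := by
    intro w
    by_cases h : w ∈ WinRegion A p (ReachObj (S ∩ G))
    · obtain ⟨σw, hσw⟩ := h
      exact ⟨σw, fun _ => hσw⟩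
    · exact ⟨defStrat A, fun hh => absurd hh h⟩
  choose g hg using hgex
  refine ⟨glueStrat A (S ∩ G) f (fun _ w => g w), ?_⟩
  intro π hplay h0 hcons j
  by_contra hnone
  push_neg at hnone
  set a := Nat.findGreatest (fun m => 0 < m ∧ π m ∈ S ∩ G) j with ha
  have haj : a ≤ j := Nat.findGreatest_le j
  have hno : ∀ k, a < k → π k ∉ S ∩ G := by
    intro k hk hmem
    rcases Nat.lt_or_ge j k with h | h
    · exact hnone k (le_of_lt h) hmem.1
    · exact Nat.findGreatest_is_greatest hk h ⟨by omega, hmem⟩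
  have hA : a = 0 ∨ (0 < a ∧ π a ∈ S ∩ G) := by
    by_cases h : a = 0
    · exact Or.inl h
    · have := (Nat.findGreatest_eq_iff.1 ha.symm).2.1 h
      exact Or.inr ⟨this.1, this.2⟩
  have hΦ : π a ∈ phi A p S G := by
    rcases hA with h | h
    · have hvm : v ∈ phi A p S G := by rw [hfix]; exact hv
      rwa [h, h0]
    · rw [show phi A p S G = G from hfix]
      exact h.2.2
  have hw : π (a + 1) ∈ WinRegion A p (ReachObj (S ∩ G)) := by
    by_cases hop : A.owner (π a) = p
    · have heq := glue_anchor hcons hA hop (hf1 (π a))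
      rw [heq]
      exact hf2 (π a) hΦ hop
    · rcases hΦ with ⟨h1, _⟩ | ⟨_, h2⟩
      · exact absurd h1 hop
      · exact h2 _ (hplay a)
  have hcons' : A.Consistent p (g (π (a + 1))) (shift π (a + 1)) :=
    glue_tail hcons hA hno
  obtain ⟨k, hk⟩ := hg (π (a + 1)) hw (shift π (a + 1)) (isPlay_shift hplay _) rfl hcons'
  exact hno (a + 1 + k) (by omega) hk

end BuchiPos

section CoBuchiNeg
open Arena OrderHom OrdinalApprox
variable {V : Type}

/-- dual operator -/
noncomputable def psi (A : Arena V 2) (p : Fin 2) (S : Set V) : Set V →o Set V :=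
  ⟨fun Y => (phi A p S Yᶜ)ᶜ, by
    intro Y Y' hY
    exact Set.compl_subset_compl.2 ((phi A p S).monotone (Set.compl_subset_compl.2 hY))⟩

lemma compl_lfp_psi (A : Arena V 2) (p : Fin 2) (S : Set V) :
    (lfp (psi A p S))ᶜ = gfp (phi A p S) := by
  have hfix : psi A p S (lfp (psi A p S)) = lfp (psi A p S) := (psi A p S).map_lfp
  have hfix' : phi A p S (lfp (psi A p S))ᶜ = (lfp (psi A p S))ᶜ := by
    have h : ((phi A p S) (lfp (psi A p S))ᶜ)ᶜ = lfp (psi A p S) := hfix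
    have h2 := congrArg compl h
    rwa [compl_compl] at h2
  apply le_antisymm
  · exact le_gfp _ (le_of_eq hfix'.symm)
  · have h2 : psi A p S (gfp (phi A p S))ᶜ = (gfp (phi A p S))ᶜ := by
      show ((phi A p S) (gfp (phi A p S))ᶜᶜ)ᶜ = _
      rw [compl_compl, (phi A p S).map_gfp]
    have h3 : lfp (psi A p S) ≤ (gfp (phi A p S))ᶜ := lfp_le _ (le_of_eq h2)
    exact Set.subset_compl_comm.1 h3

lemma mem_lfp_psi_of_not_gfp (A : Arena V 2) (p : Fin 2) (S : Set V) {v : V}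
    (hv : v ∉ gfp (phi A p S)) : v ∈ lfp (psi A p S) := by
  by_contra h
  exact hv ((compl_lfp_psi A p S) ▸ h)

/-- unfolding of the approximation sequence -/
lemma approx_unfold (A : Arena V 2) (p : Fin 2) (S : Set V) {b : Ordinal} {u : V}
    (hu : u ∈ lfpApprox (psi A p S) ⊥ b) :
    ∃ b' < b, u ∈ psi A p S (lfpApprox (psi A p S) ⊥ b') := by
  rw [lfpApprox] at hu
  simp only [bot_sup_eq, Set.iSup_eq_iUnion, Set.mem_iUnion] at hu
  obtain ⟨b', hb', hus⟩ := hu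
  exact ⟨b', hb', hus⟩

lemma approx_le_lfp_psi (A : Arena V 2) (p : Fin 2) (S : Set V) (b : Ordinal) :
    lfpApprox (psi A p S) ⊥ b ≤ lfp (psi A p S) :=
  lfpApprox_le_of_mem_fixedPoints (psi A p S) ((psi A p S).map_lfp) bot_le b

/-- ordinal rank on the complement of the Büchi winning region -/
noncomputable def rkψ (A : Arena V 2) (p : Fin 2) (S : Set V) (u : V) : Ordinal :=
  sInf {b : Ordinal | u ∈ psi A p S (lfpApprox (psi A p S) ⊥ b)}

lemma rk_mem (A : Arena V 2) (p : Fin 2) (S : Set V) {u : V} (hu : u ∈ lfp (psi A p S)) :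
    u ∈ psi A p S (lfpApprox (psi A p S) ⊥ (rkψ A p S u)) := by
  have h1 : u ∈ lfpApprox (psi A p S) ⊥ ((Order.succ (Cardinal.mk (Set V))).ord) := by
    rw [lfpApprox_ord_eq_lfp]
    exact hu
  obtain ⟨b', _, hmem⟩ := approx_unfold A p S h1
  exact csInf_mem (s := {b : Ordinal | u ∈ psi A p S (lfpApprox (psi A p S) ⊥ b)}) ⟨b', hmem⟩

lemma rk_lt (A : Arena V 2) (p : Fin 2) (S : Set V) {u : V} {b : Ordinal}
    (hu : u ∈ lfpApprox (psi A p S) ⊥ b) : rkψ A p S u < b := by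
  obtain ⟨b', hb', hmem⟩ := approx_unfold A p S hu
  exact lt_of_le_of_lt (csInf_le' hmem) hb'

/-- membership in `psi` unfolded -/
lemma mem_psi_iff (A : Arena V 2) (p : Fin 2) (S : Set V) (Y : Set V) (u : V) :
    u ∈ psi A p S Y ↔
      (A.owner u = p → ∀ w, A.E u w → w ∉ WinRegion A p (ReachObj (S \ Y))) ∧
      (A.owner u ≠ p → ∃ w, A.E u w ∧ w ∉ WinRegion A p (ReachObj (S \ Y))) := by
  have hSY : S ∩ Yᶜ = S \ Y := (Set.diff_eq S Y).symm
  have hrw : (phi A p S Yᶜ : Set V) =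
      {v | (A.owner v = p ∧ ∃ w, A.E v w ∧ w ∈ WinRegion A p (ReachObj (S \ Y))) ∨
        (A.owner v ≠ p ∧ ∀ w, A.E v w → w ∈ WinRegion A p (ReachObj (S \ Y)))} := by
    rw [← hSY]
    rfl
  show u ∉ phi A p S Yᶜ ↔ _
  rw [hrw, Set.mem_setOf_eq]
  push_neg
  rfl

theorem not_gfp_cobuchi (A : Arena V 2) (p : Fin 2) (S : Set V) (q : Fin 2)
    (hpq : ∀ x : Fin 2, x ≠ p → x = q) {v : V} (hv : v ∉ gfp (phi A p S)) :
    ∃ τ : A.Strategy, ∀ ρ, A.IsPlay ρ → ρ 0 = v → A.Consistent q τ ρ → ρ ∈ CoBuchiObj S := by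
  classical
  set apx := fun b => lfpApprox (psi A p S) ⊥ b with hapx
  set rk := rkψ A p S with hrk
  set Bad := fun (u : V) => WinRegion A p (ReachObj (S \ apx (rk u))) with hBad
  have hfex : ∀ u, ∃ w, A.E u w ∧ (u ∈ psi A p S (apx (rk u)) → A.owner u ≠ p → w ∉ Bad u) := by
    intro u
    by_cases hc : u ∈ psi A p S (apx (rk u)) ∧ A.owner u ≠ p
    · obtain ⟨w, hw1, hw2⟩ := ((mem_psi_iff A p S _ u).1 hc.1).2 hc.2
      exact ⟨w, hw1, fun _ _ => hw2⟩
    · exact ⟨dsucc A u, dsucc_spec A u, fun h1 h2 => absurd ⟨h1, h2⟩ hc⟩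
  choose f hf1 hf2 using hfex
  have hgex : ∀ u w, ∃ τw : A.Strategy, w ∉ Bad u →
      ∀ ρ, A.IsPlay ρ → ρ 0 = w → A.Consistent q τw ρ → ∀ m, ρ m ∉ S \ apx (rk u) := by
    intro u w
    by_cases h : w ∉ Bad u
    · obtain ⟨τw, hτw⟩ := not_win_reach A p (S \ apx (rk u)) q hpq h
      exact ⟨τw, fun _ => hτw⟩
    · exact ⟨defStrat A, fun hh => absurd hh h⟩
  choose g hg using hgex
  refine ⟨glueStrat A S f g, ?_⟩
  intro π hplay h0 hcons
  by_contra hB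
  have hBu : ∀ j : ℕ, ∃ k, j < k ∧ π k ∈ S := by
    intro j
    by_contra hx
    push_neg at hx
    exact hB ⟨j + 1, fun k hk => hx k (by omega)⟩
  let F : ℕ → ℕ := fun x => Nat.find (hBu x)
  have hF1 : ∀ x, x < F x ∧ π (F x) ∈ S := fun x => Nat.find_spec (hBu x)
  have hF2 : ∀ x k, k < F x → ¬(x < k ∧ π k ∈ S) := fun x k h => Nat.find_min (hBu x) h
  let a : ℕ → ℕ := fun n => Nat.rec 0 (fun _ prev => F prev) n
  have ha_succ : ∀ n, a (n + 1) = F (a n) := fun n => rfl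
  have ha_lt : ∀ n, a n < a (n + 1) := fun n => (hF1 (a n)).1
  have ha_S : ∀ n, π (a (n + 1)) ∈ S := fun n => (hF1 (a n)).2
  have ha_min : ∀ n k, a n < k → k < a (n + 1) → π k ∉ S := by
    intro n k h1 h2 hS
    exact hF2 (a n) k (by rw [← ha_succ n]; exact h2) ⟨h1, hS⟩
  have hA : ∀ n, a n = 0 ∨ (0 < a n ∧ π (a n) ∈ S) := by
    intro n
    cases n with
    | zero => exact Or.inl rfl
    | succ n => exact Or.inr ⟨by have := ha_lt n; omega, ha_S n⟩
  have key : ∀ n, π (a n) ∈ lfp (psi A p S) →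
      π (a (n + 1)) ∈ lfp (psi A p S) ∧ rk (π (a (n + 1))) < rk (π (a n)) := by
    intro n hmem
    have hψ : π (a n) ∈ psi A p S (apx (rk (π (a n)))) := rk_mem A p S hmem
    have hw : π (a n + 1) ∉ Bad (π (a n)) := by
      by_cases hop : A.owner (π (a n)) = p
      · exact ((mem_psi_iff A p S _ _).1 hψ).1 hop _ (hplay (a n))
      · have heq := glue_anchor hcons (hA n) (hpq _ hop) (hf1 (π (a n)))
        rw [heq]
        exact hf2 (π (a n)) hψ hop
    obtain ⟨ρ, hρplay, hρ0, hρcons, hρag⟩ :=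
      glue_upto hplay hcons (hA n) (ha_lt n) (fun k h1 h2 => ha_min n k h1 h2)
    have hSafe := hg (π (a n)) (π (a n + 1)) hw ρ hρplay hρ0 hρcons
    have hend := hSafe (a (n + 1) - (a n + 1))
    rw [hρag _ le_rfl, show a n + 1 + (a (n + 1) - (a n + 1)) = a (n + 1) by
      have := ha_lt n; omega] at hend
    have hY : π (a (n + 1)) ∈ apx (rk (π (a n))) := by
      by_contra hY
      exact hend ⟨ha_S n, hY⟩
    exact ⟨approx_le_lfp_psi A p S _ hY, rk_lt A p S hY⟩
  have mem_all : ∀ n, π (a n) ∈ lfp (psi A p S) := by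
    intro n
    induction n with
    | zero => show π 0 ∈ _; rw [h0]; exact mem_lfp_psi_of_not_gfp A p S hv
    | succ n ih => exact (key n ih).1
  obtain ⟨o, ho, hmin⟩ := Ordinal.lt_wf.has_min (Set.range (fun n => rk (π (a n))))
    ⟨_, ⟨0, rfl⟩⟩
  obtain ⟨n0, hn0⟩ := ho
  exact hmin _ ⟨n0 + 1, rfl⟩ (hn0 ▸ (key n0 (mem_all n0)).2)

end CoBuchiNeg

section MainDev
open Arena OrderHom
variable {V : Type} {n : ℕ}

lemma fin2_ne_zero : ∀ x : Fin 2, x ≠ 0 → x = 1 := by decide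

lemma fin2_ne_one : ∀ x : Fin 2, x ≠ 1 → x = 0 := by decide

lemma coal_owner_zero {A : Arena V n} {i : Fin n} {v : V} :
    (coalition A i).owner v = 0 ↔ A.owner v = i := by
  by_cases h : A.owner v = i <;> simp [coalition, h]

lemma coal_owner_one {A : Arena V n} {i : Fin n} {v : V} :
    (coalition A i).owner v = 1 ↔ A.owner v ≠ i := by
  by_cases h : A.owner v = i <;> simp [coalition, h]

/-- objectives of the three considered types are closed under adding prefixes -/
lemma mem_of_shift_mem {T : Set V} {Ω : Set (ℕ → V)}
    (hΩ : Ω = ReachObj T ∨ Ω = BuchiObj T ∨ Ω = CoBuchiObj T)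
    {ρ : ℕ → V} {a : ℕ} (h : shift ρ a ∈ Ω) : ρ ∈ Ω := by
  rcases hΩ with h1 | h1 | h1 <;> subst h1
  · obtain ⟨k, hk⟩ := h
    exact ⟨a + k, hk⟩
  · intro j
    obtain ⟨k, hk1, hk2⟩ := h j
    exact ⟨a + k, by omega, hk2⟩
  · obtain ⟨b, hb⟩ := h
    refine ⟨a + b, fun k hk => ?_⟩
    have h2 : ρ (a + (k - a)) ∉ T := hb (k - a) (by omega)
    rwa [show a + (k - a) = k by omega] at h2

theorem ne_fwd (A : Arena V n) (T : Fin n → Set V) (Ω : Fin n → Set (ℕ → V))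
    (hΩ : ∀ i, Ω i = ReachObj (T i) ∨ Ω i = BuchiObj (T i) ∨ Ω i = CoBuchiObj (T i))
    (π : ℕ → V) (σ : Fin n → A.Strategy) (hNE : A.IsNEObj Ω σ (π 0))
    (hout : outcome A σ (π 0) = π) :
    ∀ i, π ∉ Ω i → ∀ j, π j ∉ coalWin A i (Ω i) := by
  intro i hlose j hWin
  obtain ⟨σw, hσw⟩ := hWin
  have hstep : ∀ m, π (m + 1) = (σ (A.owner (π m))).next (pref π m) (π m) := by
    intro m
    have h := outcome_succ σ (π 0) m
    rw [hout] at h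
    exact h
  refine hlose ?_
  set τ : A.Strategy := ⟨fun h v => if h.length < j then (σ i).next h v else σw.next (h.drop j) v,
    by
      intro h v
      split_ifs
      · exact (σ i).valid h v
      · exact σw.valid (h.drop j) v⟩ with hτ
  set ρ := outcome A (Function.update σ i τ) (π 0) with hρ
  have hρ0 : ρ 0 = π 0 := rfl
  have hρstep : ∀ m, ρ (m + 1) =
      (Function.update σ i τ (A.owner (ρ m))).next (pref ρ m) (ρ m) :=
    fun m => outcome_succ _ (π 0) m
  have agree : ∀ m, m ≤ j → ρ m = π m := by
    intro m
    induction m using Nat.strong_induction_on with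
    | _ m ih =>
      match m with
      | 0 => exact fun _ => hρ0
      | m + 1 =>
        intro hm
        have hpr : pref ρ m = pref π m := pref_congr (fun k hk => ih k (by omega) (by omega))
        have hρm : ρ m = π m := ih m (by omega) (by omega)
        rw [hρstep m, hpr, hρm]
        by_cases hi : A.owner (π m) = i
        · rw [hi, Function.update_self]
          show (if (pref π m).length < j then _ else _) = _
          rw [if_pos (by rw [pref_length]; omega), ← hi, ← hstep m]
        · rw [Function.update_of_ne hi, ← hstep m]
  have hsufc : (coalition A i).Consistent 0 σw (shift ρ j) := by
    intro m hm
    have howni : A.owner (ρ (j + m)) = i := coal_owner_zero.1 hm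
    have h := hρstep (j + m)
    rw [howni, Function.update_self] at h
    show ρ (j + (m + 1)) = _
    rw [show j + (m + 1) = (j + m) + 1 by omega, h]
    show (if (pref ρ (j + m)).length < j then _ else _) = _
    rw [if_neg (by rw [pref_length]; omega)]
    congr 1
    exact pref_shift ρ j m
  have hshift : shift ρ j ∈ Ω i := by
    refine hσw (shift ρ j) (isPlay_shift (outcome_isPlay _ _) j) ?_ hsufc
    show ρ (j + 0) = π j
    rw [show j + 0 = j by omega]
    exact agree j le_rfl
  have hρΩ : ρ ∈ Ω i := mem_of_shift_mem (hΩ i) hshift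
  have := hNE i τ hρΩ
  rwa [hout] at this

end MainDev

section BwdDev
open Arena OrderHom
variable {V : Type} {n : ℕ}

/-- equilibrium profile strategy: follow `π`; after a deviation punish the deviator -/
noncomputable def master (A : Arena V n) (π : ℕ → V)
    (pun : Fin n → ℕ → A.Strategy) : A.Strategy where
  next h v :=
    if (∀ m, m < (h ++ [v]).length → (h ++ [v]).getD m (π 0) = π m) ∧
        A.E v (π (h.length + 1)) then π (h.length + 1)
    else if 1 ≤ sInf {m | (h ++ [v]).getD m (π 0) ≠ π m} then
      (pun (A.owner (π (sInf {m | (h ++ [v]).getD m (π 0) ≠ π m} - 1)))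
          (sInf {m | (h ++ [v]).getD m (π 0) ≠ π m} - 1)).next
        (h.drop (sInf {m | (h ++ [v]).getD m (π 0) ≠ π m} - 1)) v
    else dsucc A v
  valid h v := by
    split_ifs with h1 h2
    · exact h1.2
    · exact (pun _ _).valid _ _
    · exact dsucc_spec A v

lemma master_on {A : Arena V n} {π : ℕ → V} (hπ : A.IsPlay π) (pun : Fin n → ℕ → A.Strategy)
    (m : ℕ) : (master A π pun).next (pref π m) (π m) = π (m + 1) := by
  simp only [master]
  rw [← pref_succ, show (pref π m).length = m from pref_length π m]
  rw [if_pos ⟨fun k hk => pref_getD π (by rwa [pref_length] at hk) (π 0), hπ m⟩]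

lemma master_dev {A : Arena V n} {π ρ : ℕ → V} (pun : Fin n → ℕ → A.Strategy) {k m : ℕ}
    (hk1 : 1 ≤ k) (hkm : k ≤ m) (hagree : ∀ l, l < k → ρ l = π l) (hne : ρ k ≠ π k) :
    (master A π pun).next (pref ρ m) (ρ m) =
      (pun (A.owner (π (k - 1))) (k - 1)).next ((pref ρ m).drop (k - 1)) (ρ m) := by
  have hL : pref ρ m ++ [ρ m] = pref ρ (m + 1) := (pref_succ ρ m).symm
  have hsInf : sInf {l | (pref ρ (m + 1)).getD l (π 0) ≠ π l} = k := by
    have hkmem : k ∈ {l | (pref ρ (m + 1)).getD l (π 0) ≠ π l} := by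
      show (pref ρ (m + 1)).getD k (π 0) ≠ π k
      rw [pref_getD ρ (by omega) (π 0)]
      exact hne
    refine le_antisymm (Nat.sInf_le hkmem) ?_
    by_contra hlt
    push_neg at hlt
    have hmem := Nat.sInf_mem (⟨k, hkmem⟩ :
      {l | (pref ρ (m + 1)).getD l (π 0) ≠ π l}.Nonempty)
    revert hmem
    show ¬ _
    simp only [Set.mem_setOf_eq, not_not]
    rw [pref_getD ρ (by omega) (π 0)]
    exact hagree _ (by omega)
  have hbad : ¬ ((∀ l, l < (pref ρ (m + 1)).length → (pref ρ (m + 1)).getD l (π 0) = π l) ∧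
      A.E (ρ m) (π ((pref ρ m).length + 1))) := by
    rintro ⟨hgood, -⟩
    have h2 := hgood k (by rw [pref_length]; omega)
    rw [pref_getD ρ (by omega) (π 0)] at h2
    exact hne h2
  simp only [master]
  rw [hL, if_neg hbad, hsInf, if_pos hk1]

theorem ne_bwd (A : Arena V n) (T : Fin n → Set V) (Ω : Fin n → Set (ℕ → V))
    (hΩ : ∀ i, Ω i = ReachObj (T i) ∨ Ω i = BuchiObj (T i) ∨ Ω i = CoBuchiObj (T i))
    (π : ℕ → V) (hπ : A.IsPlay π)
    (hcond : ∀ i, π ∉ Ω i → ∀ j, π j ∉ coalWin A i (Ω i)) :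
    ∃ σ : Fin n → A.Strategy, A.IsNEObj Ω σ (π 0) ∧ outcome A σ (π 0) = π := by
  classical
  have hpun : ∀ (i : Fin n) (j : ℕ), ∃ τ : (coalition A i).Strategy, π ∉ Ω i →
      ∀ ρ, (coalition A i).IsPlay ρ → ρ 0 = π j → (coalition A i).Consistent 1 τ ρ →
        ρ ∉ Ω i := by
    intro i j
    by_cases hl : π ∉ Ω i
    · have hnw : π j ∉ WinRegion (coalition A i) 0 (Ω i) := hcond i hl j
      rcases hΩ i with h | h | h
      · rw [h] at hnw ⊢
        obtain ⟨τ, hτ⟩ := not_win_reach (coalition A i) 0 (T i) 1 fin2_ne_zero hnw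
        exact ⟨τ, fun _ ρ h1 h2 h3 hm => hτ ρ h1 h2 h3 hm.choose hm.choose_spec⟩
      · rw [h] at hnw ⊢
        have hng : π j ∉ gfp (phi (coalition A i) 0 (T i)) :=
          fun hg => hnw (gfp_win_buchi _ 0 (T i) hg)
        obtain ⟨τ, hτ⟩ := not_gfp_cobuchi (coalition A i) 0 (T i) 1 fin2_ne_zero hng
        refine ⟨τ, fun _ ρ h1 h2 h3 hB => ?_⟩
        obtain ⟨b, hb⟩ := hτ ρ h1 h2 h3
        obtain ⟨k, hk1, hk2⟩ := hB b
        exact hb k hk1 hk2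
      · rw [h] at hnw ⊢
        have hg : π j ∈ gfp (phi (coalition A i) 1 (T i)) := by
          by_contra hng
          obtain ⟨τ0, hτ0⟩ := not_gfp_cobuchi (coalition A i) 1 (T i) 0 fin2_ne_one hng
          exact hnw ⟨τ0, fun ρ h1 h2 h3 => hτ0 ρ h1 h2 h3⟩
        obtain ⟨τ, hτ⟩ := gfp_win_buchi (coalition A i) 1 (T i) hg
        refine ⟨τ, fun _ ρ h1 h2 h3 hCB => ?_⟩
        obtain ⟨b, hb⟩ := hCB
        obtain ⟨k, hk1, hk2⟩ := hτ ρ h1 h2 h3 b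
        exact hb k hk1 hk2
    · exact ⟨defStrat _, fun hcontra => absurd hcontra hl⟩
  choose pun hpun' using hpun
  set σone : A.Strategy :=
    master A π (fun i j => ⟨(pun i j).next, (pun i j).valid⟩) with hσone
  set σ : Fin n → A.Strategy := fun _ => σone with hσdef
  have hout : outcome A σ (π 0) = π := by
    apply outcome_eq rfl
    intro m
    exact (master_on hπ _ m).symm
  refine ⟨σ, ?_, hout⟩
  intro i τ hdev
  rw [hout]
  by_contra hlose
  set ρ := outcome A (Function.update σ i τ) (π 0) with hρdef
  by_cases hall : ∀ m, ρ m = π m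
  · exact hlose (funext hall ▸ hdev)
  · have hexdev : ∃ m, ρ m ≠ π m := by push_neg at hall; exact hall
    set k := sInf {m | ρ m ≠ π m} with hkdef
    have hkmem : ρ k ≠ π k := Nat.sInf_mem hexdev
    have hagree : ∀ l, l < k → ρ l = π l := by
      intro l hl
      by_contra hc
      have := Nat.sInf_le (show l ∈ {m | ρ m ≠ π m} from hc)
      omega
    have hk1 : 1 ≤ k := by
      rcases Nat.eq_zero_or_pos k with h | h
      · rw [h] at hkmem
        exact absurd rfl hkmem
      · exact h
    have hρstep : ∀ m, ρ (m + 1) =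
        (Function.update σ i τ (A.owner (ρ m))).next (pref ρ m) (ρ m) :=
      fun m => outcome_succ _ (π 0) m
    set d := k - 1 with hddef
    have howner : A.owner (π d) = i := by
      by_contra hop
      have h := hρstep d
      have hρd : ρ d = π d := hagree d (by omega)
      rw [hρd] at h
      rw [Function.update_of_ne hop] at h
      rw [pref_congr (fun l hl => hagree l (by omega))] at h
      have hm := master_on hπ (fun i j => ⟨(pun i j).next, (pun i j).valid⟩) d
      rw [show (σ (A.owner (π d))).next (pref π d) (π d)
          = (master A π (fun i j => ⟨(pun i j).next, (pun i j).valid⟩)).next (pref π d) (π d)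
          from rfl, hm, show d + 1 = k by omega] at h
      exact hkmem h
    have hpstep : ∀ m, 1 ≤ m → A.owner (ρ (d + m)) ≠ i →
        ρ (d + m + 1) = (pun i d).next (pref (shift ρ d) m) (ρ (d + m)) := by
      intro m hm hop
      have h := hρstep (d + m)
      rw [Function.update_of_ne hop] at h
      have hmd := master_dev (A := A) (π := π) (ρ := ρ)
        (fun i j => ⟨(pun i j).next, (pun i j).valid⟩) hk1 (show k ≤ d + m by omega)
        hagree hkmem
      rw [show (σ (A.owner (ρ (d + m)))).next (pref ρ (d + m)) (ρ (d + m))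
          = (master A π (fun i j => ⟨(pun i j).next, (pun i j).valid⟩)).next
            (pref ρ (d + m)) (ρ (d + m)) from rfl, hmd] at h
      rw [h, show k - 1 = d from rfl, ← howner]
      show ((pun (A.owner (π d)) d).next ((pref ρ (d + m)).drop d) (ρ (d + m))) = _
      rw [pref_shift ρ d m, howner]
    have hsufc : (coalition A i).Consistent 1 (pun i d) (shift ρ d) := by
      intro m hm
      have hop : A.owner (ρ (d + m)) ≠ i := coal_owner_one.1 hm
      rcases Nat.eq_zero_or_pos m with h0 | h0
      · exfalso
        rw [h0] at hop
        have : ρ (d + 0) = π d := by rw [show d + 0 = d by omega]; exact hagree d (by omega)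
        rw [this] at hop
        exact hop howner
      · have h := hpstep m h0 hop
        show ρ (d + (m + 1)) = _
        rw [show d + (m + 1) = d + m + 1 by omega, h]
        rfl
    have hρ0d : shift ρ d 0 = π d := by
      show ρ (d + 0) = π d
      rw [show d + 0 = d by omega]
      exact hagree d (by omega)
    have hbadsuf : shift ρ d ∉ Ω i :=
      hpun' i d hlose (shift ρ d) (isPlay_shift (outcome_isPlay _ _) d) hρ0d hsufc
    refine hbadsuf ?_
    rcases hΩ i with h | h | h <;> rw [h] at hdev hlose ⊢
    · obtain ⟨mv, hmv⟩ := hdev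
      rcases Nat.lt_or_ge mv k with hlt | hge
      · exact absurd ⟨mv, (hagree mv hlt) ▸ hmv⟩ hlose
      · exact ⟨mv - d, by show ρ (d + (mv - d)) ∈ T i; rw [show d + (mv - d) = mv by omega]; exact hmv⟩
    · intro j
      obtain ⟨kv, hkv1, hkv2⟩ := hdev (d + j)
      exact ⟨kv - d, by omega, by show ρ (d + (kv - d)) ∈ T i; rw [show d + (kv - d) = kv by omega]; exact hkv2⟩
    · obtain ⟨b, hb⟩ := hdev
      refine ⟨b, fun kv hkv => ?_⟩
      show ρ (d + kv) ∉ T i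
      exact hb (d + kv) (by omega)
  
end BwdDev
end Arena

open Arena

/-- Characterisation of Nash-equilibrium outcomes in games where every
player has a reachability, Büchi or co-Büchi objective. -/
theorem ne_outcome_characterisation_reach_buchi_cobuchi
    (V : Type) (n : ℕ) (A : Arena V n) (T : Fin n → Set V)
    (Ω : Fin n → Set (ℕ → V))
    (hΩ : ∀ i, Ω i = ReachObj (T i) ∨ Ω i = BuchiObj (T i) ∨ Ω i = CoBuchiObj (T i))
    (π : ℕ → V) (hπ : A.IsPlay π) :
    (∃ σ : Fin n → A.Strategy, A.IsNEObj Ω σ (π 0) ∧ outcome A σ (π 0) = π) ↔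
      ∀ i, π ∉ Ω i → ∀ j, π j ∉ coalWin A i (Ω i) := by
  constructor
  · rintro ⟨σ, hNE, hout⟩
    exact ne_fwd A T Ω hΩ π σ hNE hout
  · intro hcond
    exact ne_bwd A T Ω hΩ π hπ hcond
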